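/- Let F(w,k) = e^{2wτ} − e^{wτ} + τρ₀²BC(e^{ik}−1)V′ − γτρ₀²BC(e^{ik}−1)²V′, and expand w = w₁(ik) + w₂(ik)² + O(k³) as a solution of F = 0 near (w,k) = (0,0). Then the first-order coefficient is w₁ = −ρ₀²BCV′ and the second-order coefficient is w₂ = −(3/2)τw₁² − ((1−2γ)/2)ρ₀²BCV′. -/

import Mathlib

open Complex

lemma aux_stmt5 (a b cA cB t : ℂ)
    (f : ℂ → ℂ)
    (hf : f = fun k => Complex.exp (2*(a*(I*k)+b*(I*k)^2)*t) - Complex.exp ((a*(I*k)+b*(I*k)^2)*t)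
      + cA*(Complex.exp (I*k)-1) - cB*(Complex.exp (I*k)-1)^2) :
    f 0 = 0 ∧ deriv f 0 = a*I*t + cA*I ∧
      deriv (deriv f) 0 = -3*t^2*a^2 - 2*t*b - cA + 2*cB := by
  have hIk : ∀ k : ℂ, HasDerivAt (fun k : ℂ => I * k) I k := by
    intro k; simpa using (hasDerivAt_id k).const_mul I
  have hp : ∀ k : ℂ, HasDerivAt (fun k : ℂ => a*(I*k)+b*(I*k)^2) (a*I + 2*b*I^2*k) k := by
    intro k
    have H := ((hIk k).const_mul a).add (((hIk k).pow 2).const_mul b)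
    refine H.congr_deriv ?_
    simp only [Nat.cast_ofNat, Nat.add_one_sub_one, pow_one]
    ring
  set f1 : ℂ → ℂ := fun k =>
      Complex.exp (2*(a*(I*k)+b*(I*k)^2)*t) * (2*(a*I + 2*b*I^2*k)*t)
      - Complex.exp ((a*(I*k)+b*(I*k)^2)*t) * ((a*I + 2*b*I^2*k)*t)
      + cA*(Complex.exp (I*k)*I) - cB*(2*(Complex.exp (I*k)-1)*(Complex.exp (I*k)*I)) with hf1
  have hD1 : ∀ k : ℂ, HasDerivAt f (f1 k) k := by
    intro k
    rw [hf]
    have hE2 := (((hp k).const_mul 2).mul_const t).cexp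
    have hE1 := ((hp k).mul_const t).cexp
    have hE := (hIk k).cexp
    have H := ((hE2.sub hE1).add ((hE.sub_const 1).const_mul cA)).sub
      (((hE.sub_const 1).pow 2).const_mul cB)
    refine H.congr_deriv ?_
    simp only [Nat.cast_ofNat, Nat.add_one_sub_one, pow_one]
    ring
  have hderiv1 : deriv f = f1 := funext fun k => (hD1 k).deriv
  have hD2 : HasDerivAt f1
      (Complex.exp (2*(a*(I*(0:ℂ))+b*(I*0)^2)*t) * ((2*(a*I + 2*b*I^2*0)*t)^2 + 2*(2*b*I^2)*t)
        - Complex.exp ((a*(I*(0:ℂ))+b*(I*0)^2)*t) * (((a*I + 2*b*I^2*0)*t)^2 + (2*b*I^2)*t)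
        + cA*(Complex.exp (I*0)*I*I)
        - cB*(2*(Complex.exp (I*0)*I)*(Complex.exp (I*0)*I)
              + (2*(Complex.exp (I*0)-1))*(Complex.exp (I*0)*I*I))) 0 := by
    have hE2 := (((hp 0).const_mul 2).mul_const t).cexp
    have hE1 := ((hp 0).mul_const t).cexp
    have hE := (hIk 0).cexp
    have hq2 : HasDerivAt (fun k : ℂ => 2*(a*I + 2*b*I^2*k)*t) (2*(2*b*I^2)*t) 0 := by
      have H := ((((hasDerivAt_id (0:ℂ)).const_mul (2*b*I^2)).const_add (a*I)).const_mul 2).mul_const t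
      refine H.congr_deriv ?_
      ring
    have hq1 : HasDerivAt (fun k : ℂ => (a*I + 2*b*I^2*k)*t) ((2*b*I^2)*t) 0 := by
      have H := (((hasDerivAt_id (0:ℂ)).const_mul (2*b*I^2)).const_add (a*I)).mul_const t
      refine H.congr_deriv ?_
      ring
    have H := (((hE2.mul hq2).sub (hE1.mul hq1)).add ((hE.mul_const I).const_mul cA)).sub
      ((((hE.sub_const 1).const_mul 2).mul (hE.mul_const I)).const_mul cB)
    refine H.congr_deriv ?_
    ring
  refine ⟨?_, ?_, ?_⟩
  · rw [hf]; simp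
  · rw [hderiv1, hf1]
    simp only [mul_zero, zero_pow, Complex.exp_zero]
    norm_num
    ring
  · rw [hderiv1, hD2.deriv]
    simp only [mul_zero, Complex.exp_zero]
    norm_num
    ring_nf
    simp [Complex.I_sq]
    ring

open Complex in
theorem stmt_5 (B C ρ₀ τ γ V' : ℝ) (hB : 0 < B) (hC : 0 < C) (hρ₀ : 0 < ρ₀)
    (hτ : 0 < τ) (hγ : 0 < γ)
    (F : ℂ → ℂ → ℂ)
    (hF : ∀ w k, F w k =
      Complex.exp (2 * w * τ) - Complex.exp (w * τ) +
        (τ : ℂ) * ρ₀ ^ 2 * B * C * (Complex.exp (I * k) - 1) * V' -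
        (γ : ℂ) * τ * ρ₀ ^ 2 * B * C * (Complex.exp (I * k) - 1) ^ 2 * V')
    (w₁ w₂ : ℝ)
    (hw₁ : w₁ = -ρ₀ ^ 2 * B * C * V')
    (hw₂ : w₂ = -(3 / 2) * τ * w₁ ^ 2 - (1 - 2 * γ) / 2 * ρ₀ ^ 2 * B * C * V')
    (G : ℂ → ℂ) (hG : ∀ k, G k = F ((w₁ : ℂ) * (I * k) + (w₂ : ℂ) * (I * k) ^ 2) k) :
    G 0 = 0 ∧ deriv G 0 = 0 ∧ deriv (deriv G) 0 = 0 := by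
  have hw₁c : (w₁ : ℂ) = -(ρ₀:ℂ) ^ 2 * B * C * V' := by
    rw [hw₁]; push_cast; ring
  have hw₂c : (w₂ : ℂ) = -(3/2) * τ * (w₁:ℂ)^2 - (1 - 2*γ)/2 * ρ₀^2 * B * C * V' := by
    rw [hw₂]; push_cast; ring
  have key := aux_stmt5 (w₁:ℂ) (w₂:ℂ) ((τ:ℂ)*(ρ₀:ℂ)^2*B*C*V') ((γ:ℂ)*τ*(ρ₀:ℂ)^2*B*C*V') (τ:ℂ) G
    (funext fun k => by rw [hG k, hF]; ring)
  refine ⟨key.1, ?_, ?_⟩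
  · rw [key.2.1]
    linear_combination (I*(τ:ℂ))*hw₁c
  · rw [key.2.2]
    linear_combination (-2*(τ:ℂ))*hw₂c
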